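/- Let (M, ρ) be a metric space and T = (M, E) a tree all of whose edge lengths are positive with ρ(T) < ∞. Then T is a minimal spanning tree on (M, ρ) if and only if ρ^T_∞ ≤ ρ, where ρ^T_∞(v, w) = max{ρ(e) : e an edge of the path in T from v to w} (and 0 if v = w). -/

import Mathlib

open scoped ENNReal
open SimpleGraph

namespace MSTPaper

variable {M : Type*}

/-- The length of an edge `e` of a graph on a metric space: the extended
distance between its endpoints. -/
noncomputable def edgeLen [MetricSpace M] (e : Sym2 M) : ℝ≥0∞ :=
  Sym2.lift ⟨fun x y => edist x y, fun x y => edist_comm x y⟩ e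

/-- The length of a graph: the (possibly infinite) sum of the lengths of its edges. -/
noncomputable def graphLen [MetricSpace M] (G : SimpleGraph M) : ℝ≥0∞ :=
  ∑' e : G.edgeSet, edgeLen (e : Sym2 M)

/-- The distance between two subsets of a metric space. -/
noncomputable def setDist [MetricSpace M] (A B : Set M) : ℝ≥0∞ :=
  ⨅ x ∈ A, ⨅ y ∈ B, edist x y

/-- A minimal spanning tree on the metric space `M`: a spanning tree of finite
length whose length equals the infimum of lengths of all spanning trees on `M`. -/
def IsMST [MetricSpace M] (T : SimpleGraph M) : Prop :=
  T.IsTree ∧ graphLen T < ⊤ ∧ ∀ T' : SimpleGraph M, T'.IsTree → graphLen T ≤ graphLen T'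

/-- An edge `uv` of `G` is exact if its length equals the distance between the
two connected components obtained by removing it. -/
def ExactEdge [MetricSpace M] (G : SimpleGraph M) (u v : M) : Prop :=
  edist u v = setDist {x | (G.deleteEdges {s(u,v)}).Reachable u x}
                      {x | (G.deleteEdges {s(u,v)}).Reachable v x}





/-- crossing lemma -/
lemma exists_cross {G : SimpleGraph M} {S : Set M} :
    ∀ {u v : M} (w : G.Walk u v), u ∈ S → v ∉ S →
      ∃ x y, x ∈ S ∧ y ∉ S ∧ s(x,y) ∈ w.edges := by
  intro u v w
  induction w with
  | nil => intro h h'; exact absurd h h'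
  | cons h q ih =>
    intro hu hv
    rename_i u' w' v' -- names?
    by_cases hw : w' ∈ S
    · obtain ⟨x, y, hx, hy, hm⟩ := ih hw hv
      exact ⟨x, y, hx, hy, by simp [Walk.edges_cons, hm]⟩
    · exact ⟨u', w', hu, hw, by simp [Walk.edges_cons]⟩

/-- every vertex reachable from `u` lies on the `a`-side or the `b`-side
after deleting the edge `s(a,b)`. -/
lemma reach_side {G : SimpleGraph M} {a b : M} :
    ∀ {u z : M} (_ : G.Walk u z),
      ((G.deleteEdges {s(a,b)}).Reachable a u ∨ (G.deleteEdges {s(a,b)}).Reachable b u) →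
      ((G.deleteEdges {s(a,b)}).Reachable a z ∨ (G.deleteEdges {s(a,b)}).Reachable b z) := by
  intro u z w
  induction w with
  | nil => exact id
  | cons h q ih =>
    rename_i u' w' v'
    intro hu
    by_cases he : s(u', w') = s(a, b)
    · rw [Sym2.eq_iff] at he
      rcases he with ⟨rfl, rfl⟩ | ⟨rfl, rfl⟩
      · exact ih (Or.inr (Reachable.refl _))
      · exact ih (Or.inl (Reachable.refl _))
    · have hadj : (G.deleteEdges {s(a,b)}).Adj u' w' := by
        rw [SimpleGraph.deleteEdges_adj]
        exact ⟨h, by simpa using he⟩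
      rcases hu with hu | hu
      · exact ih (Or.inl (hu.trans hadj.reachable))
      · exact ih (Or.inr (hu.trans hadj.reachable))


lemma path_decomp {G : SimpleGraph M} {a b : M} :
    ∀ {x y : M} (p : G.Walk x y), p.IsTrail → s(a,b) ∈ p.edges →
      ((G.deleteEdges {s(a,b)}).Reachable x a ∧ (G.deleteEdges {s(a,b)}).Reachable b y) ∨
      ((G.deleteEdges {s(a,b)}).Reachable x b ∧ (G.deleteEdges {s(a,b)}).Reachable a y) := by
  intro x y p
  induction p with
  | nil => intro _ hm; simp at hm
  | cons h q ih =>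
    rename_i u' w' v'
    intro ht hm
    rw [Walk.edges_cons] at hm
    have hnd := ht.edges_nodup
    rw [Walk.edges_cons] at hnd
    by_cases he : s(u', w') = s(a, b)
    · have hq : ∀ e ∈ q.edges, e ∉ ({s(a,b)} : Set (Sym2 M)) := by
        intro e hee
        simp only [Set.mem_singleton_iff]
        rintro rfl
        rw [he] at hnd
        exact (List.nodup_cons.mp hnd).1 hee
      have hreach : (G.deleteEdges {s(a,b)}).Reachable w' v' :=
        ⟨q.toDeleteEdges _ hq⟩
      rw [Sym2.eq_iff] at he
      rcases he with ⟨rfl, rfl⟩ | ⟨rfl, rfl⟩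
      · exact Or.inl ⟨Reachable.refl _, hreach⟩
      · exact Or.inr ⟨Reachable.refl _, hreach⟩
    · have hm' : s(a,b) ∈ q.edges := by
        rcases List.mem_cons.mp hm with h' | h'
        · exact absurd h'.symm he
        · exact h'
      have hadj : (G.deleteEdges {s(a,b)}).Adj u' w' := by
        rw [SimpleGraph.deleteEdges_adj]
        exact ⟨h, by simpa using he⟩
      rcases ih ht.of_cons hm' with ⟨h1, h2⟩ | ⟨h1, h2⟩
      · exact Or.inl ⟨hadj.reachable.trans h1, h2⟩
      · exact Or.inr ⟨hadj.reachable.trans h1, h2⟩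

lemma not_adj_of_mem_path {G : SimpleGraph M} (hG : G.IsAcyclic) {x y a b : M}
    (p : G.Walk x y) (hp : p.IsPath) (hm : s(a,b) ∈ p.edges) (hne : s(a,b) ≠ s(x,y)) :
    ¬ G.Adj x y := by
  intro h
  have huniq := hG.path_unique ⟨p, hp⟩ (Path.singleton h)
  have : p.edges = [s(x,y)] := by
    have := congrArg (fun q : G.Path x y => (q : G.Walk x y).edges) huniq
    simpa [Path.singleton] using this
  rw [this] at hm
  exact hne (List.mem_singleton.mp hm)

lemma tree_bridge {G : SimpleGraph M} (hG : G.IsAcyclic) {a b : M} (h : G.Adj a b) :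
    ¬ (G.deleteEdges {s(a,b)}).Reachable a b :=
  ((isBridge_iff).mp ((isAcyclic_iff_forall_adj_isBridge.mp hG) h))


lemma swap_core {G : SimpleGraph M} (hG : G.IsTree) {x y a b : M}
    (hadj : G.Adj a b) (hnadj : ¬ G.Adj x y) (hxy : x ≠ y)
    (hra : (G.deleteEdges {s(a,b)}).Reachable x a)
    (hrb : (G.deleteEdges {s(a,b)}).Reachable b y) :
    (G.deleteEdges {s(a,b)} ⊔ SimpleGraph.fromEdgeSet {s(x,y)}).IsTree := by
  set D := G.deleteEdges {s(a,b)} with hD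
  set G' := D ⊔ SimpleGraph.fromEdgeSet {s(x,y)} with hG'
  have hbr : ¬ D.Reachable a b := tree_bridge hG.IsAcyclic hadj
  have hDle : D ≤ G' := le_sup_left
  have hadj' : G'.Adj x y := by
    simp only [hG', SimpleGraph.sup_adj, SimpleGraph.fromEdgeSet_adj]
    exact Or.inr ⟨rfl, hxy⟩
  have hux : ∀ z : M, G'.Reachable z x := by
    intro z
    obtain ⟨w⟩ := hG.isConnected.preconnected a z
    rcases reach_side w (Or.inl (Reachable.refl _)) with hz | hz
    · exact ((hz.symm.trans hra.symm).mono hDle)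
    · exact (((hz.symm.trans hrb).mono hDle).trans hadj'.symm.reachable)
  have hconn : G'.Connected := by
    rw [connected_iff]
    exact ⟨fun u v => (hux u).trans (hux v).symm, ⟨a⟩⟩
  have hGxy : s(x,y) ∉ G.edgeSet := fun hc => hnadj ((SimpleGraph.mem_edgeSet G).mp hc)
  have hndiag : ¬ (s(x,y) : Sym2 M).IsDiag := by simpa using hxy
  have hedges : G'.edgeSet = (G.edgeSet \ {s(a,b)}) ∪ {s(x,y)} := by
    rw [hG', edgeSet_sup, hD, edgeSet_deleteEdges, edgeSet_fromEdgeSet]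
    congr 1
    ext f
    simp only [Set.mem_diff, Set.mem_singleton_iff, Set.mem_setOf_eq]
    constructor
    · rintro ⟨rfl, _⟩; rfl
    · rintro rfl; exact ⟨rfl, hndiag⟩
  have hG'del : G'.deleteEdges {s(x,y)} = D := by
    apply edgeSet_inj.mp
    rw [edgeSet_deleteEdges, hedges, hD, edgeSet_deleteEdges]
    ext f
    simp only [Set.mem_diff, Set.mem_union, Set.mem_singleton_iff]
    constructor
    · rintro ⟨hf | hf, hne⟩
      · exact hf
      · exact absurd hf hne
    · rintro ⟨hf, hne⟩
      refine ⟨Or.inl ⟨hf, hne⟩, ?_⟩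
      rintro rfl; exact hGxy hf
  have hbridge : G'.IsBridge s(x,y) := by
    rw [isBridge_iff]
    show ¬(G'.deleteEdges {s(x,y)}).Reachable x y
    rw [hG'del]
    intro hr
    exact hbr ((hra.symm.trans hr).trans hrb.symm)
  have hacyc : G'.IsAcyclic := by
    intro v c hc
    have hnotin : s(x,y) ∉ c.edges :=
      (isBridge_iff_adj_and_forall_cycle_notMem hadj').mp hbridge c hc
    have hsub : ∀ f ∈ c.edges, f ∈ G.edgeSet := by
      intro f hf
      have : f ∈ G'.edgeSet := c.edges_subset_edgeSet hf
      rw [hedges] at this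
      rcases this with ⟨hf', _⟩ | hf'
      · exact hf'
      · exact absurd (Set.mem_singleton_iff.mp hf') (fun h => hnotin (h ▸ hf))
    exact hG.IsAcyclic (c.transfer G hsub) (hc.transfer hsub)
  exact ⟨hconn, hacyc⟩

lemma swap_tree {G : SimpleGraph M} (hG : G.IsTree) {x y a b : M}
    (p : G.Walk x y) (hp : p.IsPath) (hm : s(a,b) ∈ p.edges) (hne : s(a,b) ≠ s(x,y)) :
    (G.deleteEdges {s(a,b)} ⊔ SimpleGraph.fromEdgeSet {s(x,y)}).IsTree ∧ ¬ G.Adj x y := by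
  have hadj : G.Adj a b := p.adj_of_mem_edges hm
  have hxy : x ≠ y := by
    rintro rfl
    exact Path.notMem_edges_of_loop (p := ⟨p, hp⟩) hm
  have hnadj : ¬ G.Adj x y := not_adj_of_mem_path hG.IsAcyclic p hp hm hne
  rcases path_decomp p hp.isTrail hm with ⟨h1, h2⟩ | ⟨h1, h2⟩
  · exact ⟨swap_core hG hadj hnadj hxy h1 h2, hnadj⟩
  · have hsw : s(a,b) = s(b,a) := Sym2.eq_swap
    rw [hsw] at h1 h2 ⊢
    exact ⟨swap_core hG hadj.symm hnadj hxy h1 h2, hnadj⟩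

lemma cross {T T' : SimpleGraph M} [MetricSpace M] (hT : T.IsTree) (hT' : T'.IsTree)
    (hyp : ∀ x y : M, ∀ p : T.Path x y, ∀ a b : M,
      s(a,b) ∈ p.1.edges → edist a b ≤ edist x y)
    {a b : M} (hadj : T.Adj a b) (hnot : s(a,b) ∉ T'.edgeSet) :
    ∃ x y : M, s(x,y) ∈ T'.edgeSet ∧ s(x,y) ∉ T.edgeSet ∧ edist a b ≤ edist x y ∧
      (T'.deleteEdges {s(x,y)} ⊔ SimpleGraph.fromEdgeSet {s(a,b)}).IsTree := by
  haveI : DecidableEq M := Classical.decEq M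
  obtain ⟨w⟩ := hT'.isConnected.preconnected a b
  set q : T'.Path a b := w.toPath with hq
  set A : Set M := {z | (T.deleteEdges {s(a,b)}).Reachable a z} with hA
  have haA : a ∈ A := Reachable.refl _
  have hbA : b ∉ A := tree_bridge hT.IsAcyclic hadj
  obtain ⟨x, y, hxA, hyA, hmem⟩ := exists_cross q.1 haA hbA
  have hmemE : s(x,y) ∈ T'.edgeSet := q.1.edges_subset_edgeSet hmem
  have hne : s(a,b) ≠ s(x,y) := fun h => hnot (h ▸ hmemE)
  -- the T-path from x to y contains s(a,b)
  obtain ⟨w2⟩ := hT.isConnected.preconnected x y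
  set r : T.Path x y := w2.toPath with hr
  have habr : s(a,b) ∈ r.1.edges := by
    by_contra hab
    have hq2 : ∀ e ∈ r.1.edges, e ∉ ({s(a,b)} : Set (Sym2 M)) := by
      intro e he hc
      exact hab ((Set.mem_singleton_iff.mp hc) ▸ he)
    have : (T.deleteEdges {s(a,b)}).Reachable x y := ⟨r.1.toDeleteEdges _ hq2⟩
    exact hyA (hxA.trans this)
  have hlen : edist a b ≤ edist x y := hyp x y r a b habr
  have hTxy : s(x,y) ∉ T.edgeSet := by
    intro hc
    exact not_adj_of_mem_path hT.IsAcyclic r.1 r.2 habr hne ((SimpleGraph.mem_edgeSet T).mp hc)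
  refine ⟨x, y, hmemE, hTxy, hlen, ?_⟩
  exact (swap_tree hT' q.1 q.2 hmem (fun h => hne h.symm)).1

lemma edgeLen_mk [MetricSpace M] (a b : M) : edgeLen s(a,b) = edist a b := rfl

lemma edgeSet_swap {G : SimpleGraph M} {e c : Sym2 M} (hc : ¬ c.IsDiag) :
    (G.deleteEdges {e} ⊔ SimpleGraph.fromEdgeSet {c}).edgeSet
      = (G.edgeSet \ {e}) ∪ {c} := by
  rw [edgeSet_sup, edgeSet_deleteEdges, edgeSet_fromEdgeSet]
  congr 1
  ext f
  simp only [Set.mem_diff, Set.mem_singleton_iff, Set.mem_setOf_eq]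
  constructor
  · rintro ⟨rfl, _⟩; rfl
  · rintro rfl; exact ⟨rfl, hc⟩

lemma exists_inj [MetricSpace M] {T : SimpleGraph M} (hT : T.IsTree)
    (hyp : ∀ x y : M, ∀ p : T.Path x y, ∀ a b : M,
      s(a,b) ∈ p.1.edges → edist a b ≤ edist x y)
    (F : Finset (Sym2 M)) :
    (↑F : Set (Sym2 M)) ⊆ T.edgeSet → ∀ T' : SimpleGraph M, T'.IsTree →
    ∃ ψ : Sym2 M → Sym2 M, Set.InjOn ψ ↑F ∧
      ∀ f ∈ F, ψ f ∈ T'.edgeSet ∧ edgeLen f ≤ edgeLen (ψ f) ∧ (ψ f ∈ T.edgeSet → ψ f = f) := by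
  classical
  induction F using Finset.induction_on with
  | empty =>
    intro _ T' _
    exact ⟨id, by simp, by simp⟩
  | @insert e s hes ih =>
    intro hsub T' hT'
    have hsub' : (↑s : Set (Sym2 M)) ⊆ T.edgeSet :=
      fun f hf => hsub (by simpa using Or.inr hf)
    have heT : e ∈ T.edgeSet := hsub (by simp)
    by_cases heT' : e ∈ T'.edgeSet
    · obtain ⟨ψ, hinj, hprop⟩ := ih hsub' T' hT'
      set φ : Sym2 M → Sym2 M := fun f => if f = e then e else ψ f with hφdef
      have hφe : φ e = e := if_pos rfl
      have hφs : ∀ f ∈ s, φ f = ψ f := by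
        intro f hf
        exact if_neg (by rintro rfl; exact hes hf)
      have hψne : ∀ f ∈ s, ψ f ≠ e := by
        intro f hf hc
        have := (hprop f hf).2.2 (hc ▸ heT)
        rw [hc] at this
        exact hes (this ▸ hf)
      refine ⟨φ, ?_, ?_⟩
      · intro f hf g hg hfg
        simp only [Finset.coe_insert, Set.mem_insert_iff] at hf hg
        rcases hf with rfl | hf <;> rcases hg with rfl | hg
        · rfl
        · rw [hφe, hφs g hg] at hfg
          exact absurd hfg.symm (hψne g hg)
        · rw [hφe, hφs f hf] at hfg
          exact absurd hfg (hψne f hf)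
        · rw [hφs f hf, hφs g hg] at hfg
          exact hinj hf hg hfg
      · intro f hf
        rcases Finset.mem_insert.mp hf with rfl | hf
        · rw [hφe]
          exact ⟨heT', le_refl _, fun _ => rfl⟩
        · rw [hφs f hf]
          exact hprop f hf
    · obtain ⟨a, b, rfl⟩ : ∃ a b, s(a,b) = e := by
        obtain ⟨a, b⟩ := e
        exact ⟨a, b, rfl⟩
      have hadj : T.Adj a b := (SimpleGraph.mem_edgeSet T).mp heT
      obtain ⟨x, y, hxyT', hxyT, hlen, htree⟩ := cross hT hT' hyp hadj heT'
      obtain ⟨ψ, hinj, hprop⟩ := ih hsub' _ htree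
      have hedges : (T'.deleteEdges {s(x,y)} ⊔ SimpleGraph.fromEdgeSet {s(a,b)}).edgeSet
          = (T'.edgeSet \ {s(x,y)}) ∪ {s(a,b)} := edgeSet_swap (by simpa using hadj.ne)
      have hψne : ∀ f ∈ s, ψ f ≠ s(a,b) := by
        intro f hf hc
        have := (hprop f hf).2.2 (hc ▸ heT)
        rw [hc] at this
        exact hes (this ▸ hf)
      have hmemT' : ∀ f ∈ s, ψ f ∈ T'.edgeSet ∧ ψ f ≠ s(x,y) := by
        intro f hf
        have h1 := (hprop f hf).1
        rw [hedges] at h1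
        rcases h1 with ⟨h1, h2⟩ | h1
        · exact ⟨h1, fun hc => h2 (by simpa using hc)⟩
        · exact absurd (Set.mem_singleton_iff.mp h1) (hψne f hf)
      set φ : Sym2 M → Sym2 M := fun f => if f = s(a,b) then s(x,y) else ψ f with hφdef
      have hφe : φ s(a,b) = s(x,y) := if_pos rfl
      have hφs : ∀ f ∈ s, φ f = ψ f := by
        intro f hf
        exact if_neg (by rintro rfl; exact hes hf)
      refine ⟨φ, ?_, ?_⟩
      · intro f hf g hg hfg
        simp only [Finset.coe_insert, Set.mem_insert_iff] at hf hg
        rcases hf with rfl | hf <;> rcases hg with rfl | hg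
        · rfl
        · rw [hφe, hφs g hg] at hfg
          exact absurd hfg.symm (hmemT' g hg).2
        · rw [hφe, hφs f hf] at hfg
          exact absurd hfg (hmemT' f hf).2
        · rw [hφs f hf, hφs g hg] at hfg
          exact hinj hf hg hfg
      · intro f hf
        rcases Finset.mem_insert.mp hf with rfl | hf
        · rw [hφe]
          exact ⟨hxyT', by rwa [edgeLen_mk, edgeLen_mk], fun hc => absurd hc hxyT⟩
        · rw [hφs f hf]
          exact ⟨(hmemT' f hf).1, (hprop f hf).2.1, (hprop f hf).2.2⟩

lemma tsum_set_split [MetricSpace M] (S : Set (Sym2 M)) (c : Sym2 M) (hc : c ∈ S) :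
    ∑' e : S, edgeLen (e : Sym2 M)
      = (∑' e : (S \ {c} : Set (Sym2 M)), edgeLen (e : Sym2 M)) + edgeLen c := by
  have h1 : (S \ {c}) ∪ {c} = S := Set.diff_union_of_subset (by simpa using hc)
  have h2 : Disjoint (S \ {c}) ({c} : Set (Sym2 M)) := Set.disjoint_sdiff_left
  calc ∑' e : S, edgeLen (e : Sym2 M)
      = ∑' e : ((S \ {c}) ∪ {c} : Set (Sym2 M)), edgeLen (e : Sym2 M) := by rw [h1]
    _ = (∑' e : (S \ {c} : Set (Sym2 M)), edgeLen (e : Sym2 M))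
          + ∑' e : ({c} : Set (Sym2 M)), edgeLen (e : Sym2 M) :=
        Summable.tsum_union_disjoint h2 ENNReal.summable ENNReal.summable
    _ = (∑' e : (S \ {c} : Set (Sym2 M)), edgeLen (e : Sym2 M)) + edgeLen c := by
        rw [tsum_singleton]

lemma sum_le_graphLen [MetricSpace M] {G : SimpleGraph M} {s : Finset (Sym2 M)}
    (h : (↑s : Set (Sym2 M)) ⊆ G.edgeSet) : ∑ f ∈ s, edgeLen f ≤ graphLen G := by
  have h1 : ∑ f ∈ s, edgeLen f = ∑ f ∈ s, (G.edgeSet).indicator edgeLen f := by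
    apply Finset.sum_congr rfl
    intro f hf
    rw [Set.indicator_of_mem (h hf)]
  rw [h1, graphLen, tsum_subtype]
  exact ENNReal.sum_le_tsum s

/-- A spanning tree `T` of finite length with positive edge lengths is a minimal
spanning tree iff `ρ^T_∞ ≤ ρ`, i.e. iff every edge on the path in `T` from `x` to
`y` is not longer than `ρ(x, y)`. -/
theorem mst_iff_rho_infty_le [MetricSpace M] (T : SimpleGraph M) (hT : T.IsTree)
    (hpos : ∀ a b : M, T.Adj a b → 0 < edist a b) (hfin : graphLen T < ⊤) :
    IsMST T ↔ ∀ x y : M, ∀ p : T.Path x y, ∀ a b : M,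
      s(a,b) ∈ p.1.edges → edist a b ≤ edist x y := by
  constructor
  · -- minimal spanning tree → ρ∞ ≤ ρ
    intro hMST x y p a b hmem
    by_contra hlt
    push_neg at hlt
    have hxney : x ≠ y := by
      rintro rfl
      exact SimpleGraph.Path.notMem_edges_of_loop (p := p) hmem
    have hne : s(a,b) ≠ s(x,y) := by
      intro h
      have : edist a b = edist x y := by
        have := congrArg edgeLen h
        rwa [edgeLen_mk, edgeLen_mk] at this
      rw [this] at hlt
      exact lt_irrefl _ hlt
    obtain ⟨htree, hnadj⟩ := swap_tree hT p.1 p.2 hmem hne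
    set T'' := T.deleteEdges {s(a,b)} ⊔ SimpleGraph.fromEdgeSet {s(x,y)} with hT''
    have habE : s(a,b) ∈ T.edgeSet := p.1.edges_subset_edgeSet hmem
    have hxyE : s(x,y) ∉ T.edgeSet := fun hc => hnadj ((SimpleGraph.mem_edgeSet T).mp hc)
    have hedges : T''.edgeSet = (T.edgeSet \ {s(a,b)}) ∪ {s(x,y)} :=
      edgeSet_swap (by simpa using hxney)
    set S' : ℝ≥0∞ := ∑' e : (T.edgeSet \ {s(a,b)} : Set (Sym2 M)), edgeLen (e : Sym2 M)
      with hS'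
    have hlenT : graphLen T = S' + edist a b := by
      rw [graphLen, tsum_set_split T.edgeSet s(a,b) habE, edgeLen_mk]
    have hset : ((T.edgeSet \ {s(a,b)}) ∪ {s(x,y)}) \ {s(x,y)} = T.edgeSet \ {s(a,b)} := by
      ext f
      simp only [Set.mem_diff, Set.mem_union, Set.mem_singleton_iff]
      constructor
      · rintro ⟨⟨hf, h1⟩ | hf, h2⟩
        · exact ⟨hf, h1⟩
        · exact absurd hf h2
      · rintro ⟨hf, h1⟩
        exact ⟨Or.inl ⟨hf, h1⟩, fun hc => hxyE (hc ▸ hf)⟩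
    have hlenT'' : graphLen T'' = S' + edist x y := by
      rw [graphLen, hedges, tsum_set_split ((T.edgeSet \ {s(a,b)}) ∪ {s(x,y)}) s(x,y)
        (Set.mem_union_right _ rfl), edgeLen_mk, hset]
    have hS'top : S' ≠ ⊤ := by
      intro hc
      rw [hlenT, hc] at hfin
      simp at hfin
    have : graphLen T'' < graphLen T := by
      rw [hlenT, hlenT'']
      exact ENNReal.add_lt_add_left hS'top hlt
    exact absurd (hMST.2.2 T'' htree) (not_le.mpr this)
  · -- ρ∞ ≤ ρ → minimal spanning tree
    intro hyp
    refine ⟨hT, hfin, ?_⟩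
    intro T' hT'
    classical
    rw [graphLen, ENNReal.tsum_eq_iSup_sum]
    apply iSup_le
    intro t
    set F : Finset (Sym2 M) := t.image Subtype.val with hF
    have hFsub : (↑F : Set (Sym2 M)) ⊆ T.edgeSet := by
      intro f hf
      simp only [hF, Finset.coe_image, Set.mem_image, Finset.mem_coe] at hf
      obtain ⟨z, _, rfl⟩ := hf
      exact z.2
    have hsum1 : ∑ e ∈ t, edgeLen (e : Sym2 M) = ∑ f ∈ F, edgeLen f := by
      rw [hF, Finset.sum_image (fun z _ w _ h => Subtype.ext h)]
    obtain ⟨ψ, hinj, hprop⟩ := exists_inj hT hyp F hFsub T' hT'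
    have hsum2 : ∑ f ∈ F, edgeLen f ≤ ∑ f ∈ F, edgeLen (ψ f) :=
      Finset.sum_le_sum (fun f hf => (hprop f hf).2.1)
    have hsum3 : ∑ f ∈ F, edgeLen (ψ f) = ∑ g ∈ F.image ψ, edgeLen g := by
      rw [Finset.sum_image (fun z hz w hw h => hinj (Finset.mem_coe.mpr hz)
        (Finset.mem_coe.mpr hw) h)]
    have hsub' : (↑(F.image ψ) : Set (Sym2 M)) ⊆ T'.edgeSet := by
      intro g hg
      simp only [Finset.coe_image, Set.mem_image, Finset.mem_coe] at hg
      obtain ⟨f, hf, rfl⟩ := hg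
      exact (hprop f hf).1
    calc ∑ e ∈ t, edgeLen (e : Sym2 M) = ∑ f ∈ F, edgeLen f := hsum1
      _ ≤ ∑ f ∈ F, edgeLen (ψ f) := hsum2
      _ = ∑ g ∈ F.image ψ, edgeLen g := hsum3
      _ ≤ graphLen T' := sum_le_graphLen hsub'


end MSTPaper
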